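/- (Necessary condition for simultaneous bias removal and optimal performance.) Fix discrete random variables Y and A on a common probability space with H(Y|A) = 0, and let (Z_θ)_{θ ∈ Θ} be any nonempty family of discrete random variables on the same probability space. If there exists φ ∈ Θ such that I(Z_φ;A) = infimum over θ ∈ Θ of I(Z_θ;A) = 0 and I(Z_φ;Y) = supremum over θ ∈ Θ of I(Z_θ;Y), then the supremum over θ ∈ Θ of I(Z_θ;Y) equals 0. In particular, unless every element of the family has zero mutual information with Y, no single φ can simultaneously minimize I(Z_θ;A) to 0 and maximize I(Z_θ;Y) when H(Y|A) = 0. -/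
import Mathlib


open MeasureTheory ProbabilityTheory Real

/-- Shannon entropy of a discrete (finite-valued) random variable `X` under measure `μ`:
`H(X) = ∑ₛ -P(X = s) log P(X = s)`. -/
noncomputable def entropy {Ω S : Type*} [MeasurableSpace Ω] [Fintype S]
    (μ : Measure Ω) (X : Ω → S) : ℝ :=
  ∑ s : S, Real.negMulLog ((μ (X ⁻¹' {s})).toReal)

/-- Conditional Shannon entropy `H(Y | A) = H(Y, A) - H(A)`. -/
noncomputable def condEntropy {Ω S T : Type*} [MeasurableSpace Ω] [Fintype S] [Fintype T]
    (μ : Measure Ω) (Y : Ω → S) (A : Ω → T) : ℝ :=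
  entropy μ (fun ω => (Y ω, A ω)) - entropy μ A

/-- Mutual information `I(X ; Y) = H(X) + H(Y) - H(X, Y)`. -/
noncomputable def mutualInfo {Ω S T : Type*} [MeasurableSpace Ω] [Fintype S] [Fintype T]
    (μ : Measure Ω) (X : Ω → S) (Y : Ω → T) : ℝ :=
  entropy μ X + entropy μ Y - entropy μ (fun ω => (X ω, Y ω))

/-- Conditional mutual information `I(X ; Y | A) = H(X | A) - H(X | (Y, A))`. -/
noncomputable def condMutualInfo {Ω S T U : Type*} [MeasurableSpace Ω]
    [Fintype S] [Fintype T] [Fintype U]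
    (μ : Measure Ω) (X : Ω → S) (Y : Ω → T) (A : Ω → U) : ℝ :=
  condEntropy μ X A - condEntropy μ X (fun ω => (Y ω, A ω))

/-! ### Auxiliary real-analysis lemmas -/

/-- Core Gibbs inequality term: `p * (log q - log p) ≤ q - p`. -/
lemma gibbs_term {p q : ℝ} (hp : 0 ≤ p) (hq : 0 ≤ q) (h : 0 < p → 0 < q) :
    p * (Real.log q - Real.log p) ≤ q - p := by
  rcases eq_or_lt_of_le hp with hp0 | hp0
  · simp [← hp0, hq]
  · have hq0 : 0 < q := h hp0
    have hlog : Real.log q - Real.log p = Real.log (q / p) := (Real.log_div hq0.ne' hp0.ne').symm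
    rw [hlog]
    have := Real.log_le_sub_one_of_pos (div_pos hq0 hp0)
    have h2 : p * Real.log (q / p) ≤ p * (q / p - 1) :=
      mul_le_mul_of_nonneg_left this hp
    calc p * Real.log (q / p) ≤ p * (q / p - 1) := h2
      _ = q - p := by field_simp

/-- `negMulLog` is superadditive on nonnegative numbers. -/
lemma negMulLog_sum_le {ι : Type*} (s : Finset ι) (f : ι → ℝ) (hf : ∀ i ∈ s, 0 ≤ f i) :
    Real.negMulLog (∑ i ∈ s, f i) ≤ ∑ i ∈ s, Real.negMulLog (f i) := by
  have hS : Real.negMulLog (∑ i ∈ s, f i) = ∑ i ∈ s, f i * (-Real.log (∑ j ∈ s, f j)) := by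
    rw [← Finset.sum_mul, Real.negMulLog]; ring
  rw [hS]
  refine Finset.sum_le_sum fun i hi => ?_
  rcases eq_or_lt_of_le (hf i hi) with h0 | h0
  · simp [← h0]
  · have hle : f i ≤ ∑ j ∈ s, f j := Finset.single_le_sum hf hi
    have := Real.log_le_log h0 hle
    rw [Real.negMulLog]
    nlinarith

/-- Subadditivity of entropy for a two-variable pmf: `H(Z,Y) ≤ H(Z) + H(Y)`. -/
lemma subadd2 {𝒵 𝒴 : Type*} [Fintype 𝒵] [Fintype 𝒴] (q : 𝒵 → 𝒴 → ℝ)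
    (hq : ∀ z y, 0 ≤ q z y) (hsum : ∑ z, ∑ y, q z y = 1) :
    ∑ z, ∑ y, Real.negMulLog (q z y)
      ≤ (∑ z, Real.negMulLog (∑ y, q z y)) + ∑ y, Real.negMulLog (∑ z, q z y) := by
  set qZ : 𝒵 → ℝ := fun z => ∑ y, q z y with hqZ
  set qY : 𝒴 → ℝ := fun y => ∑ z, q z y with hqY
  have hqZ0 : ∀ z, 0 ≤ qZ z := fun z => Finset.sum_nonneg fun y _ => hq z y
  have hqY0 : ∀ y, 0 ≤ qY y := fun y => Finset.sum_nonneg fun z _ => hq z y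
  have key : ∑ z, ∑ y, (q z y * (Real.log (qZ z * qY y) - Real.log (q z y)))
      ≤ ∑ z, ∑ y, (qZ z * qY y - q z y) := by
    refine Finset.sum_le_sum fun z _ => Finset.sum_le_sum fun y _ => ?_
    exact gibbs_term (hq z y) (mul_nonneg (hqZ0 z) (hqY0 y))
      (fun h => by
        have h1 : 0 < qZ z := lt_of_lt_of_le h (Finset.single_le_sum (fun y' _ => hq z y') (Finset.mem_univ y))
        have h2 : 0 < qY y := lt_of_lt_of_le h (Finset.single_le_sum (fun z' _ => hq z' y) (Finset.mem_univ z))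
        exact mul_pos h1 h2)
  have hrhs : ∑ z, ∑ y, (qZ z * qY y - q z y) = 0 := by
    have h1 : ∑ z, ∑ y, qZ z * qY y = (∑ z, qZ z) * (∑ y, qY y) :=
      (Finset.sum_mul_sum _ _ _ _).symm
    have h2 : ∑ z, qZ z = 1 := hsum
    have h3 : ∑ y, qY y = 1 := by rw [← hsum]; exact Finset.sum_comm
    simp only [Finset.sum_sub_distrib]
    rw [h1, h2, h3]; ring
  have key2 : ∑ z, ∑ y, (q z y * (Real.log (qZ z * qY y) - Real.log (q z y))) ≤ 0 := by
    rw [hrhs] at key; exact key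
  -- now expand the entropies
  have eZ : ∑ z, Real.negMulLog (qZ z) = ∑ z, ∑ y, q z y * (-Real.log (qZ z)) := by
    refine Finset.sum_congr rfl fun z _ => ?_
    rw [← Finset.sum_mul, Real.negMulLog]; ring
  have eY : ∑ y, Real.negMulLog (qY y) = ∑ z, ∑ y, q z y * (-Real.log (qY y)) := by
    rw [Finset.sum_comm]
    refine Finset.sum_congr rfl fun y _ => ?_
    rw [← Finset.sum_mul, Real.negMulLog]; ring
  have eZY : ∑ z, ∑ y, Real.negMulLog (q z y)
      = ∑ z, ∑ y, q z y * (-Real.log (q z y)) := by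
    refine Finset.sum_congr rfl fun z _ => Finset.sum_congr rfl fun y _ => ?_
    rw [Real.negMulLog]; ring
  have expand : (∑ z, Real.negMulLog (qZ z)) + (∑ y, Real.negMulLog (qY y))
      - (∑ z, ∑ y, Real.negMulLog (q z y))
      = -(∑ z, ∑ y, (q z y * (Real.log (qZ z * qY y) - Real.log (q z y)))) := by
    rw [eZ, eY, eZY]
    rw [← Finset.sum_add_distrib, ← Finset.sum_sub_distrib, ← Finset.sum_neg_distrib]
    refine Finset.sum_congr rfl fun z _ => ?_
    rw [← Finset.sum_add_distrib, ← Finset.sum_sub_distrib, ← Finset.sum_neg_distrib]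
    refine Finset.sum_congr rfl fun y _ => ?_
    rcases eq_or_lt_of_le (hq z y) with h0 | h0
    · simp [← h0]
    · have h1 : 0 < qZ z := lt_of_lt_of_le h0 (Finset.single_le_sum (fun y' _ => hq z y') (Finset.mem_univ y))
      have h2 : 0 < qY y := lt_of_lt_of_le h0 (Finset.single_le_sum (fun z' _ => hq z' y) (Finset.mem_univ z))
      rw [Real.log_mul h1.ne' h2.ne']
      ring
  linarith [expand, key2]

/-- Submodularity-type inequality: `H(Z,Y,A) + H(Y) ≤ H(Z,Y) + H(Y,A)`. -/
lemma submod3 {𝒵 𝒴 𝒜 : Type*} [Fintype 𝒵] [Fintype 𝒴] [Fintype 𝒜]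
    (p : 𝒵 → 𝒴 → 𝒜 → ℝ) (hp : ∀ z y a, 0 ≤ p z y a)
    (hsum : ∑ z, ∑ y, ∑ a, p z y a = 1) :
    (∑ z, ∑ y, ∑ a, Real.negMulLog (p z y a)) + (∑ y, Real.negMulLog (∑ z, ∑ a, p z y a))
      ≤ (∑ z, ∑ y, Real.negMulLog (∑ a, p z y a))
        + (∑ y, ∑ a, Real.negMulLog (∑ z, p z y a)) := by
  classical
  set pZY : 𝒵 → 𝒴 → ℝ := fun z y => ∑ a, p z y a with hpZY
  set pYA : 𝒴 → 𝒜 → ℝ := fun y a => ∑ z, p z y a with hpYA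
  set pY : 𝒴 → ℝ := fun y => ∑ z, ∑ a, p z y a with hpY
  have hpZY0 : ∀ z y, 0 ≤ pZY z y := fun z y => Finset.sum_nonneg fun a _ => hp z y a
  have hpYA0 : ∀ y a, 0 ≤ pYA y a := fun y a => Finset.sum_nonneg fun z _ => hp z y a
  have hpY0 : ∀ y, 0 ≤ pY y :=
    fun y => Finset.sum_nonneg fun z _ => Finset.sum_nonneg fun a _ => hp z y a
  set q : 𝒵 → 𝒴 → 𝒜 → ℝ :=
    fun z y a => if pY y = 0 then 0 else pZY z y * pYA y a / pY y with hq
  have hq0 : ∀ z y a, 0 ≤ q z y a := by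
    intro z y a
    rw [hq]
    dsimp only
    split
    · exact le_rfl
    · exact div_nonneg (mul_nonneg (hpZY0 z y) (hpYA0 y a)) (hpY0 y)
  -- positivity facts in the case `0 < p z y a`
  have hposZY : ∀ z y a, 0 < p z y a → 0 < pZY z y := fun z y a h =>
    lt_of_lt_of_le h (Finset.single_le_sum (fun a' _ => hp z y a') (Finset.mem_univ a))
  have hposYA : ∀ z y a, 0 < p z y a → 0 < pYA y a := fun z y a h =>
    lt_of_lt_of_le h (Finset.single_le_sum (fun z' _ => hp z' y a) (Finset.mem_univ z))
  have hposY : ∀ z y a, 0 < p z y a → 0 < pY y := fun z y a h =>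
    lt_of_lt_of_le (hposZY z y a h)
      (Finset.single_le_sum (fun z' _ => hpZY0 z' y) (Finset.mem_univ z))
  have hqval : ∀ z y a, 0 < p z y a → q z y a = pZY z y * pYA y a / pY y := by
    intro z y a h
    rw [hq]
    exact if_neg (hposY z y a h).ne'
  -- sum of q equals 1
  have hqy : ∀ y, ∑ z, ∑ a, q z y a = pY y := by
    intro y
    by_cases h : pY y = 0
    · simp [hq, h]
    · have : ∑ z, ∑ a, q z y a = (∑ z, pZY z y * (∑ a, pYA y a)) / pY y := by
        rw [Finset.sum_div]
        refine Finset.sum_congr rfl fun z _ => ?_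
        rw [hq]
        simp only [if_neg h]
        rw [Finset.mul_sum, Finset.sum_div]
      rw [this]
      have hYA : ∑ a, pYA y a = pY y := Finset.sum_comm
      rw [hYA, ← Finset.sum_mul]
      have hZY : ∑ z, pZY z y = pY y := rfl
      rw [hZY]
      field_simp
  have hqsum : ∑ z, ∑ y, ∑ a, q z y a = 1 := by
    rw [Finset.sum_comm]
    calc ∑ y, ∑ z, ∑ a, q z y a = ∑ y, pY y := Finset.sum_congr rfl fun y _ => hqy y
      _ = ∑ z, ∑ y, ∑ a, p z y a := Finset.sum_comm
      _ = 1 := hsum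
  -- Gibbs
  have key : ∑ z, ∑ y, ∑ a, (p z y a * (Real.log (q z y a) - Real.log (p z y a)))
      ≤ ∑ z, ∑ y, ∑ a, (q z y a - p z y a) := by
    refine Finset.sum_le_sum fun z _ => Finset.sum_le_sum fun y _ =>
      Finset.sum_le_sum fun a _ => ?_
    refine gibbs_term (hp z y a) (hq0 z y a) fun h => ?_
    rw [hqval z y a h]
    exact div_pos (mul_pos (hposZY z y a h) (hposYA z y a h)) (hposY z y a h)
  have key2 : ∑ z, ∑ y, ∑ a, (p z y a * (Real.log (q z y a) - Real.log (p z y a))) ≤ 0 := by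
    refine key.trans (le_of_eq ?_)
    simp only [Finset.sum_sub_distrib]
    rw [hqsum, hsum]
    ring
  -- expansions
  have e1 : ∑ z, ∑ y, Real.negMulLog (pZY z y)
      = ∑ z, ∑ y, ∑ a, p z y a * (-Real.log (pZY z y)) := by
    refine Finset.sum_congr rfl fun z _ => Finset.sum_congr rfl fun y _ => ?_
    rw [← Finset.sum_mul, Real.negMulLog]
    ring
  have e2 : ∑ y, ∑ a, Real.negMulLog (pYA y a)
      = ∑ z, ∑ y, ∑ a, p z y a * (-Real.log (pYA y a)) := by
    calc ∑ y, ∑ a, Real.negMulLog (pYA y a)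
        = ∑ y, ∑ a, ∑ z, p z y a * (-Real.log (pYA y a)) := by
          refine Finset.sum_congr rfl fun y _ => Finset.sum_congr rfl fun a _ => ?_
          rw [← Finset.sum_mul, Real.negMulLog]
          ring
      _ = ∑ y, ∑ z, ∑ a, p z y a * (-Real.log (pYA y a)) :=
          Finset.sum_congr rfl fun y _ => Finset.sum_comm
      _ = ∑ z, ∑ y, ∑ a, p z y a * (-Real.log (pYA y a)) := Finset.sum_comm
  have e3 : ∑ z, ∑ y, ∑ a, Real.negMulLog (p z y a)
      = ∑ z, ∑ y, ∑ a, p z y a * (-Real.log (p z y a)) := by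
    refine Finset.sum_congr rfl fun z _ => Finset.sum_congr rfl fun y _ =>
      Finset.sum_congr rfl fun a _ => ?_
    rw [Real.negMulLog]
    ring
  have e4 : ∑ y, Real.negMulLog (pY y)
      = ∑ z, ∑ y, ∑ a, p z y a * (-Real.log (pY y)) := by
    calc ∑ y, Real.negMulLog (pY y)
        = ∑ y, ∑ z, ∑ a, p z y a * (-Real.log (pY y)) := by
          refine Finset.sum_congr rfl fun y _ => ?_
          have hfac : ∑ z, ∑ a, p z y a * (-Real.log (pY y))
              = (∑ z, ∑ a, p z y a) * (-Real.log (pY y)) := by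
            rw [Finset.sum_mul]
            exact Finset.sum_congr rfl fun z _ => (Finset.sum_mul _ _ _).symm
          rw [hfac, Real.negMulLog]
          ring
      _ = ∑ z, ∑ y, ∑ a, p z y a * (-Real.log (pY y)) := Finset.sum_comm
  have expand : (∑ z, ∑ y, Real.negMulLog (pZY z y))
        + (∑ y, ∑ a, Real.negMulLog (pYA y a))
        - (∑ z, ∑ y, ∑ a, Real.negMulLog (p z y a))
        - (∑ y, Real.negMulLog (pY y))
      = -(∑ z, ∑ y, ∑ a, (p z y a * (Real.log (q z y a) - Real.log (p z y a)))) := by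
    rw [e1, e2, e3, e4]
    simp only [← Finset.sum_neg_distrib, ← Finset.sum_add_distrib, ← Finset.sum_sub_distrib]
    refine Finset.sum_congr rfl fun z _ => Finset.sum_congr rfl fun y _ =>
      Finset.sum_congr rfl fun a _ => ?_
    rcases eq_or_lt_of_le (hp z y a) with h0 | h0
    · simp [← h0]
    · rw [hqval z y a h0]
      rw [Real.log_div (mul_ne_zero (hposZY z y a h0).ne' (hposYA z y a h0).ne')
        (hposY z y a h0).ne']
      rw [Real.log_mul (hposZY z y a h0).ne' (hposYA z y a h0).ne']
      ring
  linarith [key2, expand]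

/-- Monotonicity: `H(Z,A) ≤ H(Z,Y,A)`. -/
lemma mono3 {𝒵 𝒴 𝒜 : Type*} [Fintype 𝒵] [Fintype 𝒴] [Fintype 𝒜]
    (p : 𝒵 → 𝒴 → 𝒜 → ℝ) (hp : ∀ z y a, 0 ≤ p z y a) :
    ∑ z, ∑ a, Real.negMulLog (∑ y, p z y a)
      ≤ ∑ z, ∑ y, ∑ a, Real.negMulLog (p z y a) := by
  refine Finset.sum_le_sum fun z _ => ?_
  calc ∑ a, Real.negMulLog (∑ y, p z y a)
      ≤ ∑ a, ∑ y, Real.negMulLog (p z y a) :=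
        Finset.sum_le_sum fun a _ => negMulLog_sum_le _ _ fun y _ => hp z y a
    _ = ∑ y, ∑ a, Real.negMulLog (p z y a) := Finset.sum_comm

/-- Splitting a measure of a set along the fibers of a finite-valued measurable map. -/
lemma measure_fiber_sum {Ω T : Type*} [MeasurableSpace Ω] (μ : MeasureTheory.Measure Ω)
    [MeasureTheory.IsFiniteMeasure μ] [Fintype T] [MeasurableSpace T]
    [MeasurableSingletonClass T] {W : Ω → T} (hW : Measurable W)
    {s : Set Ω} (hs : MeasurableSet s) :
    (μ s).toReal = ∑ t, (μ (s ∩ W ⁻¹' {t})).toReal := by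
  have hset : s = ⋃ t, s ∩ W ⁻¹' {t} := by
    ext ω
    simp
  have hdisj : Pairwise (Function.onFun Disjoint fun t => s ∩ W ⁻¹' {t}) := by
    intro t t' htt'
    simp only [Function.onFun, Set.disjoint_left]
    rintro ω ⟨-, h1⟩ ⟨-, h2⟩
    simp only [Set.mem_preimage, Set.mem_singleton_iff] at h1 h2
    exact htt' (h1 ▸ h2 ▸ rfl)
  have hmeas : ∀ t, MeasurableSet (s ∩ W ⁻¹' {t}) :=
    fun t => hs.inter (hW (measurableSet_singleton t))
  rw [← ENNReal.toReal_sum (fun t _ => MeasureTheory.measure_ne_top μ _)]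
  congr 1
  calc μ s = μ (⋃ t, s ∩ W ⁻¹' {t}) := by rw [← hset]
    _ = ∑' t, μ (s ∩ W ⁻¹' {t}) := MeasureTheory.measure_iUnion hdisj hmeas
    _ = ∑ t, μ (s ∩ W ⁻¹' {t}) := tsum_fintype _

theorem necessary_condition
    {Ω 𝒵 𝒴 𝒜 : Type*} [MeasurableSpace Ω]
    [Fintype 𝒵] [MeasurableSpace 𝒵] [MeasurableSingletonClass 𝒵]
    [Fintype 𝒴] [MeasurableSpace 𝒴] [MeasurableSingletonClass 𝒴]
    [Fintype 𝒜] [MeasurableSpace 𝒜] [MeasurableSingletonClass 𝒜]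
    (μ : Measure Ω) [IsProbabilityMeasure μ]
    (Y : Ω → 𝒴) (A : Ω → 𝒜) (hY : Measurable Y) (hA : Measurable A)
    {Θ : Type*} [Nonempty Θ] (Z : Θ → Ω → 𝒵) (hZ : ∀ θ, Measurable (Z θ))
    (hYA : condEntropy μ Y A = 0)
    (hexists : ∃ φ : Θ,
      mutualInfo μ (Z φ) A = (⨅ θ : Θ, mutualInfo μ (Z θ) A) ∧
      (⨅ θ : Θ, mutualInfo μ (Z θ) A) = 0 ∧
      mutualInfo μ (Z φ) Y = (⨆ θ : Θ, mutualInfo μ (Z θ) Y)) :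
    (⨆ θ : Θ, mutualInfo μ (Z θ) Y) = 0 := by
  obtain ⟨φ, hφ1, hφ2, hφ3⟩ := hexists
  rw [← hφ3]
  have hIZA : mutualInfo μ (Z φ) A = 0 := by rw [hφ1, hφ2]
  set W : Ω → 𝒵 := Z φ with hW
  have hWm : Measurable W := hZ φ
  -- the joint distribution
  set p : 𝒵 → 𝒴 → 𝒜 → ℝ :=
    fun z y a => (μ (W ⁻¹' {z} ∩ Y ⁻¹' {y} ∩ A ⁻¹' {a})).toReal with hp_def
  have hp : ∀ z y a, 0 ≤ p z y a := fun z y a => ENNReal.toReal_nonneg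
  have hmZ : ∀ z : 𝒵, MeasurableSet (W ⁻¹' {z}) := fun z => hWm (measurableSet_singleton z)
  have hmY : ∀ y : 𝒴, MeasurableSet (Y ⁻¹' {y}) := fun y => hY (measurableSet_singleton y)
  have hmA : ∀ a : 𝒜, MeasurableSet (A ⁻¹' {a}) := fun a => hA (measurableSet_singleton a)
  -- expansion of each measure through the fibers
  have splitZ : ∀ (s : Set Ω), MeasurableSet s →
      (μ s).toReal = ∑ z, (μ (s ∩ W ⁻¹' {z})).toReal :=
    fun s hs => measure_fiber_sum μ hWm hs
  have splitY : ∀ (s : Set Ω), MeasurableSet s →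
      (μ s).toReal = ∑ y, (μ (s ∩ Y ⁻¹' {y})).toReal :=
    fun s hs => measure_fiber_sum μ hY hs
  have splitA : ∀ (s : Set Ω), MeasurableSet s →
      (μ s).toReal = ∑ a, (μ (s ∩ A ⁻¹' {a})).toReal :=
    fun s hs => measure_fiber_sum μ hA hs
  -- entropies in terms of p
  have eZ : entropy μ W = ∑ z, Real.negMulLog (∑ y, ∑ a, p z y a) := by
    refine Finset.sum_congr rfl fun z _ => ?_
    congr 1
    rw [splitY _ (hmZ z)]
    refine Finset.sum_congr rfl fun y _ => ?_
    rw [splitA _ ((hmZ z).inter (hmY y))]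
  have eY : entropy μ Y = ∑ y, Real.negMulLog (∑ z, ∑ a, p z y a) := by
    refine Finset.sum_congr rfl fun y _ => ?_
    congr 1
    rw [splitZ _ (hmY y)]
    refine Finset.sum_congr rfl fun z _ => ?_
    rw [splitA _ ((hmY y).inter (hmZ z))]
    refine Finset.sum_congr rfl fun a _ => ?_
    rw [hp_def]
    congr 2
    ext ω
    simp only [Set.mem_inter_iff, Set.mem_preimage]
    tauto
  have eA : entropy μ A = ∑ a, Real.negMulLog (∑ z, ∑ y, p z y a) := by
    refine Finset.sum_congr rfl fun a _ => ?_
    congr 1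
    rw [splitZ _ (hmA a)]
    refine Finset.sum_congr rfl fun z _ => ?_
    rw [splitY _ ((hmA a).inter (hmZ z))]
    refine Finset.sum_congr rfl fun y _ => ?_
    rw [hp_def]
    congr 2
    ext ω
    simp only [Set.mem_inter_iff, Set.mem_preimage]
    tauto
  have preZY : ∀ (z : 𝒵) (y : 𝒴),
      (fun ω => (W ω, Y ω)) ⁻¹' {(z, y)} = W ⁻¹' {z} ∩ Y ⁻¹' {y} := by
    intro z y
    ext ω
    simp [Prod.ext_iff]
  have preZA : ∀ (z : 𝒵) (a : 𝒜),
      (fun ω => (W ω, A ω)) ⁻¹' {(z, a)} = W ⁻¹' {z} ∩ A ⁻¹' {a} := by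
    intro z a
    ext ω
    simp [Prod.ext_iff]
  have preYA : ∀ (y : 𝒴) (a : 𝒜),
      (fun ω => (Y ω, A ω)) ⁻¹' {(y, a)} = Y ⁻¹' {y} ∩ A ⁻¹' {a} := by
    intro y a
    ext ω
    simp [Prod.ext_iff]
  have eZY : entropy μ (fun ω => (W ω, Y ω)) = ∑ z, ∑ y, Real.negMulLog (∑ a, p z y a) := by
    rw [entropy, Fintype.sum_prod_type]
    refine Finset.sum_congr rfl fun z _ => Finset.sum_congr rfl fun y _ => ?_
    congr 1
    rw [preZY, splitA _ ((hmZ z).inter (hmY y))]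
  have eZA : entropy μ (fun ω => (W ω, A ω)) = ∑ z, ∑ a, Real.negMulLog (∑ y, p z y a) := by
    rw [entropy, Fintype.sum_prod_type]
    refine Finset.sum_congr rfl fun z _ => Finset.sum_congr rfl fun a _ => ?_
    congr 1
    rw [preZA, splitY _ ((hmZ z).inter (hmA a))]
    refine Finset.sum_congr rfl fun y _ => ?_
    rw [hp_def]
    congr 2
    ext ω
    simp only [Set.mem_inter_iff, Set.mem_preimage]
    tauto
  have eYA : entropy μ (fun ω => (Y ω, A ω)) = ∑ y, ∑ a, Real.negMulLog (∑ z, p z y a) := by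
    rw [entropy, Fintype.sum_prod_type]
    refine Finset.sum_congr rfl fun y _ => Finset.sum_congr rfl fun a _ => ?_
    congr 1
    rw [preYA, splitZ _ ((hmY y).inter (hmA a))]
    refine Finset.sum_congr rfl fun z _ => ?_
    rw [hp_def]
    congr 2
    ext ω
    simp only [Set.mem_inter_iff, Set.mem_preimage]
    tauto
  -- total mass one
  have hsum : ∑ z, ∑ y, ∑ a, p z y a = 1 := by
    have h0 : (μ Set.univ).toReal = 1 := by simp
    rw [splitZ _ MeasurableSet.univ] at h0
    rw [← h0]
    refine Finset.sum_congr rfl fun z _ => ?_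
    rw [Set.univ_inter, splitY _ (hmZ z)]
    refine Finset.sum_congr rfl fun y _ => ?_
    rw [splitA _ ((hmZ z).inter (hmY y))]
  -- the three information inequalities
  have h1 := subadd2 (fun z y => ∑ a, p z y a)
    (fun z y => Finset.sum_nonneg fun a _ => hp z y a) hsum
  have h2 := submod3 p hp hsum
  have h3 := mono3 p hp
  -- translate the hypotheses
  rw [condEntropy, eYA, eA] at hYA
  rw [mutualInfo, eZ, eA, eZA] at hIZA
  rw [mutualInfo, eZ, eY, eZY]
  linarith [h1, h2, h3, hYA, hIZA]
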